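/- Let q ≥ 2, let w be a word of length k over an alphabet of q letters, let α be a complex root of the recurrence polynomial P_w with |α| ≤ 2 and multiplicity m, and let Q be the polynomial Q(x) = P_w(x)/(x − α)^m. Then for every natural number l, the l-th derivative of Q satisfies |Q^{(l)}(α)| ≤ q·e²·k!. -/

import Mathlib

/-- The `i`-th autocorrelation bit `b_i` of a word `w` (for `1 ≤ i ≤ w.length`):
`1` if the prefix of `w` of length `i` equals the suffix of `w` of length `i`, else `0`. -/
def acorrBit {α : Type*} [DecidableEq α] (w : List α) (i : ℕ) : ℕ :=
  if w.take i = w.drop (w.length - i) then 1 else 0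

/-- The inverse autocorrelation polynomial `A_w(x) = ∑_{i=1}^k b_i x^(i-1)`, over `ℝ`. -/
noncomputable def APolyR {α : Type*} [DecidableEq α] (w : List α) : Polynomial ℝ :=
  ∑ i ∈ Finset.range w.length, Polynomial.C (acorrBit w (i + 1) : ℝ) * Polynomial.X ^ i

/-- The inverse autocorrelation polynomial `A_w(x)`, over `ℂ`. -/
noncomputable def APolyC {α : Type*} [DecidableEq α] (w : List α) : Polynomial ℂ :=
  ∑ i ∈ Finset.range w.length, Polynomial.C (acorrBit w (i + 1) : ℂ) * Polynomial.X ^ i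

/-- The recurrence polynomial `P_w(x) = 1 + (x - q)·A_w(x)`, over `ℝ`. -/
noncomputable def PPolyR (q : ℕ) {α : Type*} [DecidableEq α] (w : List α) : Polynomial ℝ :=
  1 + (Polynomial.X - Polynomial.C (q : ℝ)) * APolyR w

/-- The recurrence polynomial `P_w(x) = 1 + (x - q)·A_w(x)`, over `ℂ`. -/
noncomputable def PPolyC (q : ℕ) {α : Type*} [DecidableEq α] (w : List α) : Polynomial ℂ :=
  1 + (Polynomial.X - Polynomial.C (q : ℂ)) * APolyC w

/-- `h_w(n)`: the number of words of length `n` over `Fin q` whose last `w.length` letters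
equal `w` and which contain no other occurrence of `w` as consecutive letters. -/
noncomputable def hitCount (q : ℕ) (w : List (Fin q)) (n : ℕ) : ℕ :=
  Nat.card {l : List (Fin q) // l.length = n ∧ l.drop (n - w.length) = w ∧
    ∀ p < n - w.length, (l.drop p).take w.length ≠ w}

/-- The first hitting probability `P_h(w,n) = h_w(n+k)/q^(n+k)` where `k = w.length`. -/
noncomputable def hitProb (q : ℕ) (w : List (Fin q)) (n : ℕ) : ℝ :=
  (hitCount q w (n + w.length) : ℝ) / (q : ℝ) ^ (n + w.length)

/-- The constant `C_{w/w'} = ln(1+r)/r` with `r = (A_w(q) − A_{w'}(q))/A_{w'}(q)`. -/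
noncomputable def Crat (q : ℕ) (w w' : List (Fin q)) : ℝ :=
  Real.log (1 + ((APolyR w).eval (q : ℝ) - (APolyR w').eval (q : ℝ)) / (APolyR w').eval (q : ℝ)) /
    (((APolyR w).eval (q : ℝ) - (APolyR w').eval (q : ℝ)) / (APolyR w').eval (q : ℝ))

/-- The partial-fraction coefficient `c_w = 1/P_w'(α_m)`. -/
noncomputable def cwCoef (q : ℕ) (w : List (Fin q)) (αm : ℝ) : ℝ :=
  1 / ((PPolyR q w).derivative.eval αm)


open Polynomial

lemma myAcorrBit_le_one {β : Type*} [DecidableEq β] (w : List β) (i : ℕ) : acorrBit w i ≤ 1 := by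
  unfold acorrBit; split <;> norm_num

lemma myAPolyC_coeff {β : Type*} [DecidableEq β] (w : List β) (i : ℕ) :
    (APolyC w).coeff i = if i < w.length then (acorrBit w (i+1) : ℂ) else 0 := by
  unfold APolyC
  rw [Polynomial.finset_sum_coeff]
  simp only [Polynomial.coeff_C_mul, Polynomial.coeff_X_pow, mul_ite, mul_one, mul_zero]
  rw [Finset.sum_ite_eq (Finset.range w.length) i (fun j => (acorrBit w (j+1) : ℂ))]
  simp [Finset.mem_range]

lemma myAPolyC_cases {β : Type*} [DecidableEq β] (w : List β) (i : ℕ) :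
    (APolyC w).coeff i = 0 ∨ (APolyC w).coeff i = 1 := by
  rw [myAPolyC_coeff]
  split
  · have h := myAcorrBit_le_one w (i+1)
    interval_cases h' : (acorrBit w (i+1)) <;> simp
  · left; rfl

lemma myAPolyC_coeff_zero {β : Type*} [DecidableEq β] (w : List β) {i : ℕ} (h : w.length ≤ i) :
    (APolyC w).coeff i = 0 := by
  rw [myAPolyC_coeff, if_neg (by omega)]

lemma myPPolyC_coeff (q : ℕ) {β : Type*} [DecidableEq β] (w : List β) (i : ℕ) :
    (PPolyC q w).coeff i =
      (if i = 0 then 1 else (APolyC w).coeff (i - 1)) - (q : ℂ) * (APolyC w).coeff i := by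
  unfold PPolyC
  rw [Polynomial.coeff_add, sub_mul, Polynomial.coeff_sub, Polynomial.coeff_C_mul,
    Polynomial.coeff_one]
  cases i with
  | zero => simp; ring
  | succ j => simp [Polynomial.coeff_X_mul]

lemma myPPolyC_coeff_zero (q : ℕ) {β : Type*} [DecidableEq β] (w : List β) {i : ℕ}
    (h : w.length < i) : (PPolyC q w).coeff i = 0 := by
  rw [myPPolyC_coeff, myAPolyC_coeff_zero w (by omega), myAPolyC_coeff_zero w (by omega),
    if_neg (by omega)]
  ring

lemma myPPolyC_natDegree_le (q : ℕ) {β : Type*} [DecidableEq β] (w : List β) :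
    (PPolyC q w).natDegree ≤ w.length := by
  rw [Polynomial.natDegree_le_iff_coeff_eq_zero]
  intro N hN; exact myPPolyC_coeff_zero q w hN

lemma myPPolyC_coeff_abs_le (q : ℕ) (hq : 2 ≤ q) {β : Type*} [DecidableEq β] (w : List β)
    (i : ℕ) : ‖(PPolyC q w).coeff i‖ ≤ q := by
  have hq2 : (2 : ℝ) ≤ (q : ℝ) := by exact_mod_cast hq
  rw [myPPolyC_coeff]
  have hcase : (if i = 0 then (1 : ℂ) else (APolyC w).coeff (i - 1)) = 0 ∨
      (if i = 0 then (1 : ℂ) else (APolyC w).coeff (i - 1)) = 1 := by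
    split
    · right; rfl
    · exact myAPolyC_cases w (i - 1)
  rcases hcase with h1 | h1 <;> rcases myAPolyC_cases w i with h2 | h2 <;>
      rw [h1, h2] <;> simp only [mul_zero, mul_one, sub_zero, zero_sub, norm_neg]
  · simpa using le_trans zero_le_two hq2
  · simpa using le_trans (by norm_num) hq2
  · simpa using le_trans one_le_two hq2
  · have hrw : (1 : ℂ) - (q : ℂ) = (((1 : ℝ) - q : ℝ) : ℂ) := by push_cast; ring
    rw [hrw, Complex.norm_real, Real.norm_eq_abs, abs_of_nonpos (by linarith)]
    linarith

lemma myFactBound (l m i n k : ℕ) (hn : n = m + l) (hik : i + n ≤ k) :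
    (l.factorial : ℝ) * ((i + n).choose n) ≤ (k.factorial : ℝ) / (i.factorial : ℝ) := by
  have hipos : (0 : ℝ) < (i.factorial : ℝ) := by exact_mod_cast i.factorial_pos
  rw [le_div_iff₀ hipos]
  have hnat : l.factorial * (i + n).choose n * i.factorial ≤ k.factorial := by
    have hch : (i + n).choose n * n.factorial * i.factorial = (i + n).factorial := by
      have := Nat.choose_mul_factorial_mul_factorial (Nat.le_add_left n i)
      simpa using this
    calc l.factorial * (i + n).choose n * i.factorial
        ≤ n.factorial * (i + n).choose n * i.factorial := by
          have : l.factorial ≤ n.factorial := Nat.factorial_le (by omega)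
          exact Nat.mul_le_mul_right _ (Nat.mul_le_mul_right _ this)
      _ = (i + n).factorial := by rw [← hch]; ring
      _ ≤ k.factorial := Nat.factorial_le hik
  exact_mod_cast hnat

/-- Let `α` be a root of `P_w` with `|α| ≤ 2` and multiplicity `m`, and let
`Q(x) = P_w(x)/(x − α)^m`. Then for every `l`, `|Q^{(l)}(α)| ≤ q·e²·k!`. -/
theorem stmt7 (q k : ℕ) (hq : 2 ≤ q) (w : List (Fin q)) (hwlen : w.length = k)
    (α : ℂ) (hroot : (PPolyC q w).IsRoot α) (habs : ‖α‖ ≤ 2)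
    (Q : Polynomial ℂ)
    (hQ : PPolyC q w =
      (Polynomial.X - Polynomial.C α) ^ ((PPolyC q w).rootMultiplicity α) * Q) :
    ∀ l : ℕ, ‖(Polynomial.derivative^[l] Q).eval α‖ ≤
      (q : ℝ) * Real.exp 2 * (Nat.factorial k) := by
  intro l
  classical
  set P := PPolyC q w with hP
  set m := P.rootMultiplicity α with hm
  set n := m + l with hn
  -- Step 1: iterated derivative via Hasse derivative
  have h1 : (Polynomial.derivative^[l] Q) = l.factorial • Polynomial.hasseDeriv l Q := by
    rw [← Polynomial.factorial_smul_hasseDeriv]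
    rfl
  have h1' : (Polynomial.derivative^[l] Q).eval α
      = (l.factorial : ℂ) * (Polynomial.hasseDeriv l Q).eval α := by
    rw [h1]
    simp [nsmul_eq_mul]
  -- Step 2: taylor expansion
  have htP : Polynomial.taylor α P = Polynomial.X ^ m * Polynomial.taylor α Q := by
    rw [hQ]
    simp [Polynomial.taylor_apply, Polynomial.mul_comp, Polynomial.pow_comp,
      Polynomial.sub_comp, Polynomial.X_comp, Polynomial.C_comp]
  have h2 : (Polynomial.hasseDeriv l Q).eval α = (Polynomial.hasseDeriv (l + m) P).eval α := by
    rw [← Polynomial.taylor_coeff, ← Polynomial.taylor_coeff, htP,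
      Polynomial.coeff_X_pow_mul]
  -- Step 3: bound
  have hdegP : P.natDegree ≤ k := hwlen ▸ myPPolyC_natDegree_le q w
  have hdeg : (Polynomial.hasseDeriv (l + m) P).natDegree < k + 1 :=
    Nat.lt_succ_of_le (le_trans (Polynomial.natDegree_hasseDeriv_le P (l + m))
      (le_trans (Nat.sub_le _ _) hdegP))
  have heval : (Polynomial.hasseDeriv (l + m) P).eval α
      = ∑ i ∈ Finset.range (k + 1), (Polynomial.hasseDeriv (l + m) P).coeff i * α ^ i :=
    Polynomial.eval_eq_sum_range' hdeg α
  rw [h1', norm_mul, h2, heval, Complex.norm_natCast]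
  calc (l.factorial : ℝ) *
        ‖∑ i ∈ Finset.range (k + 1), (Polynomial.hasseDeriv (l + m) P).coeff i * α ^ i‖
      ≤ (l.factorial : ℝ) * ∑ i ∈ Finset.range (k + 1),
          ‖(Polynomial.hasseDeriv (l + m) P).coeff i * α ^ i‖ := by
        apply mul_le_mul_of_nonneg_left (norm_sum_le _ _) (by positivity)
    _ = ∑ i ∈ Finset.range (k + 1), (l.factorial : ℝ) *
          ‖(Polynomial.hasseDeriv (l + m) P).coeff i * α ^ i‖ := by
        rw [Finset.mul_sum]
    _ ≤ ∑ i ∈ Finset.range (k + 1), (q : ℝ) * ((k.factorial : ℝ) / (i.factorial : ℝ)) * 2 ^ i := by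
        apply Finset.sum_le_sum
        intro i _
        rw [Polynomial.hasseDeriv_coeff]
        by_cases hz : P.coeff (i + (l + m)) = 0
        · rw [hz]
          simp only [mul_zero, zero_mul, norm_zero]
          positivity
        · have hik : i + (l + m) ≤ k := by
            by_contra hc
            exact hz (hP ▸ myPPolyC_coeff_zero q w (by omega : w.length < i + (l + m)))
          have hcoef : ‖P.coeff (i + (l + m))‖ ≤ q := myPPolyC_coeff_abs_le q hq w _
          have hαi : ‖α ^ i‖ ≤ 2 ^ i := by
            rw [norm_pow]
            exact pow_le_pow_left₀ (norm_nonneg _) habs i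
          have hfact : (l.factorial : ℝ) * ((i + (l + m)).choose (l + m))
              ≤ (k.factorial : ℝ) / (i.factorial : ℝ) := by
            have := myFactBound l m i (l + m) k (by omega) hik
            simpa using this
          calc (l.factorial : ℝ) *
                ‖((i + (l + m)).choose (l + m) : ℂ) * P.coeff (i + (l + m)) * α ^ i‖
              = ((l.factorial : ℝ) * ((i + (l + m)).choose (l + m))) *
                  (‖P.coeff (i + (l + m))‖ * ‖α ^ i‖) := by
                rw [norm_mul, norm_mul, Complex.norm_natCast]; ring
            _ ≤ ((k.factorial : ℝ) / (i.factorial : ℝ)) * ((q : ℝ) * 2 ^ i) := by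
                apply mul_le_mul hfact
                · exact mul_le_mul hcoef hαi (norm_nonneg _) (by positivity)
                · positivity
                · positivity
            _ = (q : ℝ) * ((k.factorial : ℝ) / (i.factorial : ℝ)) * 2 ^ i := by ring
    _ = (q : ℝ) * (k.factorial : ℝ) *
          ∑ i ∈ Finset.range (k + 1), (2 : ℝ) ^ i / (i.factorial : ℝ) := by
        rw [Finset.mul_sum]
        apply Finset.sum_congr rfl
        intro i _
        ring
    _ ≤ (q : ℝ) * (k.factorial : ℝ) * Real.exp 2 := by
        apply mul_le_mul_of_nonneg_left (Real.sum_le_exp_of_nonneg (by norm_num) (k + 1))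
          (by positivity)
    _ = (q : ℝ) * Real.exp 2 * (k.factorial : ℝ) := by ring
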